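/- Let f ∈ C⁰(ℝ^d, ℝ^d) with d ≥ 2, y₁ ∈ ℝ, and suppose the level set L := {x : (f(x))₁ = y₁} is non-empty and compact. Let K ⊂ ℝ^d be compact with L ⊂ interior(K) and L ∩ ∂K = ∅. Then ε := (1/2)·inf_{x ∈ ∂K} |(f(x))₁ - y₁| is strictly positive, and for every homeomorphism φ : ℝ^d → ℝ^d one has sup_{x ∈ K} |(f(x))₁ - (φ(x))₁| ≥ ε. -/

import Mathlib

theorem stmt_12 (d : ℕ) (hd : 2 ≤ d)
    (f : EuclideanSpace ℝ (Fin d) → EuclideanSpace ℝ (Fin d)) (hf : Continuous f)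
    (y₁ : ℝ) (K : Set (EuclideanSpace ℝ (Fin d)))
    (hLne : ({x | f x ⟨0, by omega⟩ = y₁} :
      Set (EuclideanSpace ℝ (Fin d))).Nonempty)
    (hLc : IsCompact {x : EuclideanSpace ℝ (Fin d) | f x ⟨0, by omega⟩ = y₁})
    (hK : IsCompact K)
    (hLK : {x : EuclideanSpace ℝ (Fin d) | f x ⟨0, by omega⟩ = y₁} ⊆ interior K)
    (hLbd : {x : EuclideanSpace ℝ (Fin d) | f x ⟨0, by omega⟩ = y₁} ∩ frontier K = ∅) :
    0 < (1/2) * sInf ((fun x => |f x ⟨0, by omega⟩ - y₁|) '' frontier K) ∧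
    ∀ φ : EuclideanSpace ℝ (Fin d) ≃ₜ EuclideanSpace ℝ (Fin d),
      (1/2) * sInf ((fun x => |f x ⟨0, by omega⟩ - y₁|) '' frontier K) ≤
        sSup ((fun x => |f x ⟨0, by omega⟩ - φ x ⟨0, by omega⟩|) '' K) := by
  haveI : Nonempty (Fin d) := ⟨⟨0, by omega⟩⟩
  set i0 : Fin d := ⟨0, by omega⟩ with hi0
  set i1 : Fin d := ⟨1, by omega⟩ with hi1
  have hi01 : i1 ≠ i0 := by simp [hi0, hi1, Fin.ext_iff]
  set g : EuclideanSpace ℝ (Fin d) → ℝ := fun x => |f x i0 - y₁| with hg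
  have hgc : Continuous g := ((PiLp.continuous_apply 2 _ i0).comp hf).sub continuous_const |>.abs
  -- frontier K is compact and nonempty
  have hKcl : IsClosed K := hK.isClosed
  obtain ⟨p, hp⟩ := hLne
  have hpK : p ∈ K := interior_subset (hLK hp)
  have hfrc : IsCompact (frontier K) :=
    hK.of_isClosed_subset isClosed_frontier (hKcl.frontier_subset)
  have hKne : K ≠ Set.univ := by
    exact hK.ne_univ
  have hfrne : (frontier K).Nonempty := nonempty_frontier_iff.mpr ⟨⟨p, hpK⟩, hKne⟩
  have hIne : (g '' frontier K).Nonempty := hfrne.image g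
  have hIc : IsCompact (g '' frontier K) := hfrc.image hgc
  have hInfmem : sInf (g '' frontier K) ∈ g '' frontier K := hIc.sInf_mem hIne
  -- positivity
  have hpos : 0 < sInf (g '' frontier K) := by
    obtain ⟨x, hx, hxe⟩ := hInfmem
    rw [← hxe]
    have hxne : f x i0 ≠ y₁ := by
      intro h
      exact absurd (hLbd ▸ (Set.mem_inter (a := {x | f x i0 = y₁}) h hx)) (Set.notMem_empty x)
    simpa [hg] using sub_ne_zero_of_ne hxne
  constructor
  · linarith
  intro φ
  set h : EuclideanSpace ℝ (Fin d) → ℝ := fun x => |f x i0 - φ x i0| with hh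
  have hhc : Continuous h :=
    (((PiLp.continuous_apply 2 _ i0).comp hf).sub ((PiLp.continuous_apply 2 _ i0).comp φ.continuous)).abs
  have hJc : IsCompact (h '' K) := hK.image hhc
  have hJbdd : BddAbove (h '' K) := hJc.bddAbove
  have hle : ∀ x ∈ K, h x ≤ sSup (h '' K) := fun x hx => le_csSup hJbdd ⟨x, hx, rfl⟩
  -- the level set of φ's first coordinate through p
  set c : ℝ := φ p i0 with hc
  set N : Set (EuclideanSpace ℝ (Fin d)) := {x | φ x i0 = c} with hN
  have hNconn : IsPreconnected N := by
    have hconv : Convex ℝ ({z : EuclideanSpace ℝ (Fin d) | z i0 = c}) := by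
      intro x hx y hy a b ha hb hab
      simp only [Set.mem_setOf_eq] at *
      have : (a • x + b • y) i0 = a * x i0 + b * y i0 := rfl
      rw [this, hx, hy]
      linear_combination c * hab
    have : N = φ.symm '' {z : EuclideanSpace ℝ (Fin d) | z i0 = c} := by
      ext x
      simp only [hN, Set.mem_setOf_eq, Set.mem_image]
      constructor
      · intro hx; exact ⟨φ x, hx, φ.symm_apply_apply x⟩
      · rintro ⟨z, hz, rfl⟩; simpa using hz
    rw [this]
    exact (hconv.isPreconnected).image _ φ.symm.continuous.continuousOn
  -- N is unbounded: it contains points outside K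
  have hNout : ∃ q ∈ N, q ∉ K := by
    obtain ⟨R, hR⟩ := (hK.image φ.continuous).isBounded.subset_ball 0
    refine ⟨φ.symm (EuclideanSpace.single i0 c + EuclideanSpace.single i1 (R + |c| + 1)), ?_, ?_⟩
    · show φ _ i0 = c
      rw [φ.apply_symm_apply]
      have : (EuclideanSpace.single i0 c + EuclideanSpace.single i1 (R + |c| + 1)) i0
          = c + 0 := by
        have h01 : i0 ≠ i1 := fun h => hi01 h.symm
        simp [EuclideanSpace.single_apply, h01]
      simpa using this
    · intro hqK
      have hmem : (EuclideanSpace.single i0 c + EuclideanSpace.single i1 (R + |c| + 1))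
          ∈ Metric.ball (0 : EuclideanSpace ℝ (Fin d)) R := by
        apply hR
        refine ⟨_, hqK, φ.apply_symm_apply _⟩
      rw [Metric.mem_ball, dist_zero_right] at hmem
      have h1 : ‖EuclideanSpace.single i1 (R + |c| + 1)‖
          ≤ ‖EuclideanSpace.single i0 c + EuclideanSpace.single i1 (R + |c| + 1)‖
            + ‖EuclideanSpace.single i0 c‖ := by
        have := norm_add_le (EuclideanSpace.single i0 c + EuclideanSpace.single i1 (R + |c| + 1))
          (-(EuclideanSpace.single i0 c))
        simpa [add_assoc] using this
      rw [EuclideanSpace.norm_single, EuclideanSpace.norm_single] at h1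
      have hR0 : 0 ≤ R := le_trans (norm_nonneg _) (le_of_lt hmem)
      rw [Real.norm_eq_abs, Real.norm_eq_abs] at h1
      have : |R + |c| + 1| = R + |c| + 1 := abs_of_nonneg (by positivity)
      rw [this] at h1
      linarith
  obtain ⟨q, hqN, hqK⟩ := hNout
  -- N meets frontier K
  have hNfr : (N ∩ frontier K).Nonempty := by
    by_contra hcon
    rw [Set.not_nonempty_iff_eq_empty] at hcon
    have hcover : N ⊆ interior K ∪ (closure K)ᶜ := by
      intro x hx
      by_cases hxc : x ∈ closure K
      · left
        by_contra hxi
        have : x ∈ frontier K := ⟨hxc, hxi⟩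
        exact absurd (hcon ▸ Set.mem_inter hx this) (Set.notMem_empty x)
      · right; exact hxc
    have hpN : p ∈ N := rfl
    have hpint : p ∈ interior K := by
      rcases hcover hpN with h | h
      · exact h
      · exact absurd (subset_closure hpK) h
    have hqc : q ∈ (closure K)ᶜ := by
      rcases hcover hqN with h | h
      · exact absurd (interior_subset h) hqK
      · exact h
    obtain ⟨x, hx⟩ := hNconn (interior K) (closure K)ᶜ isOpen_interior
      (isClosed_closure).isOpen_compl hcover ⟨p, hpN, hpint⟩ ⟨q, hqN, hqc⟩
    exact hx.2.2 (subset_closure (interior_subset hx.2.1))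
  obtain ⟨x, hxN, hxfr⟩ := hNfr
  have hxK : x ∈ K := hKcl.frontier_subset hxfr
  -- conclude
  have h1 : sInf (g '' frontier K) ≤ g x :=
    csInf_le hIc.bddBelow ⟨x, hxfr, rfl⟩
  have h2 : g x ≤ h x + h p := by
    have hxN' : φ x i0 = c := hxN
    calc g x = |f x i0 - y₁| := rfl
      _ = |(f x i0 - φ x i0) + (φ p i0 - f p i0) + (f p i0 - y₁) + (φ x i0 - φ p i0)| := by
          ring_nf
      _ = |(f x i0 - φ x i0) + (φ p i0 - f p i0)| := by
          rw [hp, hxN', hc]; ring_nf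
      _ ≤ |f x i0 - φ x i0| + |φ p i0 - f p i0| := abs_add_le _ _
      _ = h x + h p := by rw [hh, abs_sub_comm (φ p i0)]
  have h3 : h x ≤ sSup (h '' K) := hle x hxK
  have h4 : h p ≤ sSup (h '' K) := hle p hpK
  linarith
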